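/- Let P and Q be longest paths in a finite simple graph G with V(P) ∩ V(Q) = {a_1,…,a_ℓ} (ℓ ≥ 1), and write P = P_0 + P_1 + ⋯ + P_ℓ and Q = Q_0 + Q_1 + ⋯ + Q_ℓ as concatenations of segments at the intersection vertices. Then there is no path R in G, internally disjoint from V(P) ∪ V(Q), joining an internal vertex of the extremal segment P_0 (excluding intersection vertices) to an internal vertex of an extremal segment Q_0 or Q_ℓ (excluding intersection vertices). -/

import Mathlib

open SimpleGraph

private lemma isPath_append_of {V : Type} {G : SimpleGraph V} {a b c : V}
    {w1 : G.Walk a b} {w2 : G.Walk b c} (h1 : w1.IsPath) (h2 : w2.IsPath)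
    (h : ∀ z ∈ w1.support, z ∈ w2.support → z = b) : (w1.append w2).IsPath := by
  rw [Walk.isPath_def, Walk.support_append]
  have hb : b ∉ w2.support.tail := by
    have hnd := h2.support_nodup
    rw [w2.support_eq_cons] at hnd
    exact (List.nodup_cons.1 hnd).1
  refine List.Nodup.append h1.support_nodup
    (List.Nodup.sublist (List.tail_sublist _) h2.support_nodup) ?_
  intro z hz1 hz2
  have hzb : z = b := h z hz1 (List.mem_of_mem_tail hz2)
  exact hb (hzb ▸ hz2)

private lemma indexOf_le_of_mem_takeUntil {V : Type} [DecidableEq V] {G : SimpleGraph V}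
    {a b x z : V} {p : G.Walk a b} (hp : p.IsPath) (hx : x ∈ p.support)
    (hz : z ∈ (p.takeUntil x hx).support) :
    p.support.idxOf z ≤ p.support.idxOf x := by
  have hsup : p.support = (p.takeUntil x hx).support ++ (p.dropUntil x hx).support.tail := by
    rw [← Walk.support_append, p.take_spec hx]
  set t := (p.takeUntil x hx).support with ht
  have hxt : x ∈ t := (p.takeUntil x hx).end_mem_support
  have hnd : t.Nodup := (hp.takeUntil hx).support_nodup
  have htne : t ≠ [] := (p.takeUntil x hx).support_ne_nil
  have hlast : t.getLast htne = x := (p.takeUntil x hx).getLast_support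
  have hsplit : t.dropLast ++ [x] = t := by
    rw [← hlast]; exact List.dropLast_append_getLast htne
  have hxnd : x ∉ t.dropLast := by
    have hnd' := hnd
    rw [← hsplit] at hnd'
    have hdisj := List.disjoint_of_nodup_append hnd'
    intro hmem
    exact hdisj hmem (List.mem_singleton_self x)
  have hidxx : t.idxOf x = t.dropLast.length := by
    rw [← hsplit, List.idxOf_append_of_notMem hxnd]
    simp
  have hzlt : t.idxOf z < t.length := List.idxOf_lt_length_iff.2 hz
  have htlen : t.length = t.dropLast.length + 1 := by
    conv_lhs => rw [← hsplit]
    simp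
  rw [hsup, List.idxOf_append_of_mem hz, List.idxOf_append_of_mem hxt, hidxx]
  omega

private lemma indexOf_ge_of_mem_dropUntil {V : Type} [DecidableEq V] {G : SimpleGraph V}
    {a b x z : V} {p : G.Walk a b} (hp : p.IsPath) (hx : x ∈ p.support)
    (hz : z ∈ (p.dropUntil x hx).support) :
    p.support.idxOf x ≤ p.support.idxOf z := by
  have hsup : p.support = (p.takeUntil x hx).support ++ (p.dropUntil x hx).support.tail := by
    rw [← Walk.support_append, p.take_spec hx]
  have hz' : z = x ∨ z ∈ (p.dropUntil x hx).support.tail := by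
    rwa [(p.dropUntil x hx).support_eq_cons, List.mem_cons] at hz
  rcases hz' with rfl | hz'
  · exact le_refl _
  · have hnd : p.support.Nodup := hp.support_nodup
    rw [hsup] at hnd
    have hdisj := List.disjoint_of_nodup_append hnd
    have hznt : z ∉ (p.takeUntil x hx).support := fun hmem => hdisj hmem hz'
    have hxt : x ∈ (p.takeUntil x hx).support := (p.takeUntil x hx).end_mem_support
    have hlt := List.idxOf_lt_length_iff.2 hxt
    rw [hsup, List.idxOf_append_of_mem hxt, List.idxOf_append_of_notMem hznt]
    omega

/-- The core combinatorial contradiction: from segments of two longest paths and a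
connecting path `r`, build two paths whose total length exceeds the allowed bound. -/
private lemma core_contradiction {V : Type} {G : SimpleGraph V} {u v x y e1 e2 : V}
    {LP LQ : ℕ}
    {tP : G.Walk u x} {dP : G.Walk x v} {s1 : G.Walk y e1} {s2 : G.Walk e2 y}
    {r : G.Walk x y}
    (htP : tP.IsPath) (hdP : dP.IsPath) (hs1 : s1.IsPath) (hs2 : s2.IsPath)
    (hr : r.IsPath)
    (PS QS : V → Prop)
    (htPsub : ∀ z ∈ tP.support, PS z)
    (hdPsub : ∀ z ∈ dP.support, PS z)
    (hs1sub : ∀ z ∈ s1.support, QS z)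
    (hs2sub : ∀ z ∈ s2.support, QS z)
    (htPq : ∀ z ∈ tP.support, ¬ QS z)
    (hs2p : ∀ z ∈ s2.support, ¬ PS z)
    (hrP : ∀ z ∈ r.support, PS z → z = x)
    (hrQ : ∀ z ∈ r.support, QS z → z = y)
    (hmaxP : ∀ ⦃a b : V⦄ (w : G.Walk a b), w.IsPath → w.length ≤ LP)
    (hmaxQ : ∀ ⦃a b : V⦄ (w : G.Walk a b), w.IsPath → w.length ≤ LQ)
    (hlenP : tP.length + dP.length = LP)
    (hlenQ : s1.length + s2.length = LQ)
    (hrpos : 0 < r.length) : False := by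
  -- Path A : u → x → y → e1
  have hA1 : (tP.append r).IsPath :=
    isPath_append_of htP hr (fun z hz1 hz2 => hrP z hz2 (htPsub z hz1))
  have hA : ((tP.append r).append s1).IsPath := by
    refine isPath_append_of hA1 hs1 ?_
    intro z hz1 hz2
    rw [Walk.mem_support_append_iff] at hz1
    rcases hz1 with hz1 | hz1
    · exact absurd (hs1sub z hz2) (htPq z hz1)
    · exact hrQ z hz1 (hs1sub z hz2)
  -- Path B : e2 → y → x → v
  have hB1 : (s2.append r.reverse).IsPath := by
    refine isPath_append_of hs2 hr.reverse ?_
    intro z hz1 hz2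
    rw [Walk.support_reverse, List.mem_reverse] at hz2
    exact hrQ z hz2 (hs2sub z hz1)
  have hB : ((s2.append r.reverse).append dP).IsPath := by
    refine isPath_append_of hB1 hdP ?_
    intro z hz1 hz2
    rw [Walk.mem_support_append_iff] at hz1
    rcases hz1 with hz1 | hz1
    · exact absurd (hdPsub z hz2) (hs2p z hz1)
    · rw [Walk.support_reverse, List.mem_reverse] at hz1
      exact hrP z hz1 (hdPsub z hz2)
  have hAle := hmaxP _ hA
  have hBle := hmaxQ _ hB
  rw [Walk.length_append, Walk.length_append] at hAle hBle
  rw [Walk.length_reverse] at hBle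
  omega

/-- `p` is a longest path in `G`: it is a path and no path in `G` is longer. -/
def IsLongestPath {V : Type} (G : SimpleGraph V) {u v : V} (p : G.Walk u v) : Prop :=
  p.IsPath ∧ ∀ ⦃a b : V⦄ (q : G.Walk a b), q.IsPath → q.length ≤ p.length

/-- Let `P`, `Q` be longest paths with nonempty vertex intersection.  There is no
path `R`, internally disjoint from `V(P) ∪ V(Q)`, joining an internal vertex `x` of
the extremal segment `P₀` of `P` (a vertex of `P` occurring strictly before every
intersection vertex along `P`) to an internal vertex `y` of an extremal segment
`Q₀` or `Q_ℓ` of `Q` (a vertex of `Q` occurring strictly before, or strictly after,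
every intersection vertex along `Q`). -/
theorem no_connection_between_extremal_segments {V : Type} [Fintype V] [DecidableEq V]
    (G : SimpleGraph V) {u v c d x y : V}
    (p : G.Walk u v) (q : G.Walk c d)
    (hp : IsLongestPath G p) (hq : IsLongestPath G q)
    (hinter : ∃ z, z ∈ p.support ∧ z ∈ q.support)
    (hx : x ∈ p.support)
    (hxfirst : ∀ z ∈ p.support, z ∈ q.support →
      p.support.idxOf x < p.support.idxOf z)
    (hy : y ∈ q.support)
    (hyext : (∀ z ∈ q.support, z ∈ p.support →
        q.support.idxOf y < q.support.idxOf z) ∨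
      (∀ z ∈ q.support, z ∈ p.support →
        q.support.idxOf z < q.support.idxOf y))
    (r : G.Walk x y) (hr : r.IsPath)
    (hint : ∀ z ∈ r.support, z ≠ x → z ≠ y → z ∉ p.support ∧ z ∉ q.support) :
    False := by
  obtain ⟨hpPath, hpMax⟩ := hp
  obtain ⟨hqPath, hqMax⟩ := hq
  have hxq : x ∉ q.support := fun h => lt_irrefl _ (hxfirst x hx h)
  have hyp : y ∉ p.support := by
    rcases hyext with h | h
    · exact fun hyp => lt_irrefl _ (h y hy hyp)
    · exact fun hyp => lt_irrefl _ (h y hy hyp)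
  have hxy : x ≠ y := fun h => hyp (h ▸ hx)
  have hrpos : 0 < r.length := by
    rcases Nat.eq_zero_or_pos r.length with h0 | h0
    · exact absurd (Walk.eq_of_length_eq_zero h0) hxy
    · exact h0
  have hrP : ∀ z ∈ r.support, z ∈ p.support → z = x := by
    intro z hz hzp
    by_cases h1 : z = x
    · exact h1
    by_cases h2 : z = y
    · exact absurd (h2 ▸ hzp) hyp
    · exact absurd hzp (hint z hz h1 h2).1
  have hrQ : ∀ z ∈ r.support, z ∈ q.support → z = y := by
    intro z hz hzq
    by_cases h2 : z = y
    · exact h2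
    by_cases h1 : z = x
    · exact absurd (h1 ▸ hzq) hxq
    · exact absurd hzq (hint z hz h1 h2).2
  have htPq : ∀ z ∈ (p.takeUntil x hx).support, z ∉ q.support := by
    intro z hz hzq
    have h1 := hxfirst z (p.support_takeUntil_subset hx hz) hzq
    have h2 := indexOf_le_of_mem_takeUntil hpPath hx hz
    omega
  have hlenP : (p.takeUntil x hx).length + (p.dropUntil x hx).length = p.length := by
    have h := congrArg Walk.length (p.take_spec hx)
    rwa [Walk.length_append] at h
  have hlenQ : (q.takeUntil y hy).length + (q.dropUntil y hy).length = q.length := by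
    have h := congrArg Walk.length (q.take_spec hy)
    rwa [Walk.length_append] at h
  rcases hyext with hcase | hcase
  · -- y occurs before all intersection vertices on q
    have hs2p : ∀ z ∈ (q.takeUntil y hy).support, z ∉ p.support := by
      intro z hz hzp
      have h1 := hcase z (q.support_takeUntil_subset hy hz) hzp
      have h2 := indexOf_le_of_mem_takeUntil hqPath hy hz
      omega
    exact core_contradiction (hpPath.takeUntil hx) (hpPath.dropUntil hx)
      (hqPath.dropUntil hy) (hqPath.takeUntil hy) hr
      (· ∈ p.support) (· ∈ q.support)
      (fun z hz => p.support_takeUntil_subset hx hz)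
      (fun z hz => p.support_dropUntil_subset hx hz)
      (fun z hz => q.support_dropUntil_subset hy hz)
      (fun z hz => q.support_takeUntil_subset hy hz)
      htPq hs2p hrP hrQ hpMax hqMax hlenP (by omega) hrpos
  · -- y occurs after all intersection vertices on q
    have hs2p : ∀ z ∈ (q.dropUntil y hy).support, z ∉ p.support := by
      intro z hz hzp
      have h1 := hcase z (q.support_dropUntil_subset hy hz) hzp
      have h2 := indexOf_ge_of_mem_dropUntil hqPath hy hz
      omega
    refine core_contradiction (hpPath.takeUntil hx) (hpPath.dropUntil hx)
      ((hqPath.takeUntil hy).reverse) ((hqPath.dropUntil hy).reverse) hr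
      (· ∈ p.support) (· ∈ q.support)
      (fun z hz => p.support_takeUntil_subset hx hz)
      (fun z hz => p.support_dropUntil_subset hx hz)
      ?_ ?_ htPq ?_ hrP hrQ hpMax hqMax hlenP ?_ hrpos
    · intro z hz
      rw [Walk.support_reverse, List.mem_reverse] at hz
      exact q.support_takeUntil_subset hy hz
    · intro z hz
      rw [Walk.support_reverse, List.mem_reverse] at hz
      exact q.support_dropUntil_subset hy hz
    · intro z hz
      rw [Walk.support_reverse, List.mem_reverse] at hz
      exact hs2p z hz
    · rw [Walk.length_reverse, Walk.length_reverse]; omega
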